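/- arXiv:0802.3651 — 4 statements merged into one kernel-verified Lean document; each statement's English description precedes it below -/
import Mathlib

section
/- Let U : C → Set be a monadic right adjoint (i.e. U has a left adjoint F and the comparison functor to the Eilenberg–Moore category of the induced monad is an equivalence), and let I be a small category with object type ob(I). Let I₀ denote the discrete category on ob(I) and ι : I₀ → I the identity-on-objects inclusion. Then the functor U_I : C^I → Set^{I₀}, sending a diagram A : I → C to the family (i ↦ U(A(i))), is a monadic right adjoint (its left adjoint F_I is the left Kan extension along ι followed by pointwise application of F). -/
section AuxUniverses
universe v₁ v₂ u₁ u₂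

namespace CategoryTheory

namespace MyMonadicity

open Limits Monad

noncomputable section

namespace MonadicityInternal

variable {C : Type u₁} {D : Type u₂}
variable [Category.{v₁} C] [Category.{v₂} D]
variable {G : D ⥤ C} {F : C ⥤ D} (adj : F ⊣ G)

/-- The "main pair" for an algebra `(A, α)` is the pair of morphisms `(F α, ε_FA)`. It is always a
reflexive pair, and will be used to construct the left adjoint to the comparison functor and show it
is an equivalence.
-/
instance main_pair_reflexive (A : adj.toMonad.Algebra) :
    IsReflexivePair (F.map A.a) (adj.counit.app (F.obj A.A)) := by
  apply IsReflexivePair.mk' (F.map (adj.unit.app _)) _ _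
  · exact (F.map_comp _ _).symm.trans ((congr_arg F.map A.unit).trans (F.map_id _))
  · exact adj.left_triangle_components _

/-- The "main pair" for an algebra `(A, α)` is the pair of morphisms `(F α, ε_FA)`. It is always a
`G`-split pair, and will be used to construct the left adjoint to the comparison functor and show it
is an equivalence.
-/
instance main_pair_G_split (A : adj.toMonad.Algebra) :
    G.IsSplitPair (F.map A.a)
      (adj.counit.app (F.obj A.A)) where
  splittable := ⟨_, _, ⟨beckSplitCoequalizer A⟩⟩

/-- The object function for the left adjoint to the comparison functor. -/
def comparisonLeftAdjointObj (A : adj.toMonad.Algebra)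
    [HasCoequalizer (F.map A.a) (adj.counit.app _)] : D :=
  coequalizer (F.map A.a) (adj.counit.app _)

set_option linter.unusedVariables false in
/--
We have a bijection of homsets which will be used to construct the left adjoint to the comparison
functor.
-/
@[simps!]
def comparisonLeftAdjointHomEquiv (A : adj.toMonad.Algebra) (B : D)
    [HasCoequalizer (F.map A.a) (adj.counit.app (F.obj A.A))] :
    (comparisonLeftAdjointObj adj A ⟶ B) ≃ (A ⟶ (comparison adj).obj B) :=
  calc
    (comparisonLeftAdjointObj adj A ⟶ B) ≃ { f : F.obj A.A ⟶ B // _ } :=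
      Cofork.IsColimit.homIso (colimit.isColimit _) B
    _ ≃ { g : A.A ⟶ G.obj B // G.map (F.map g) ≫ G.map (adj.counit.app B) = A.a ≫ g } := by
      refine (adj.homEquiv _ _).subtypeEquiv ?_
      intro f
      rw [← (adj.homEquiv _ _).injective.eq_iff, Adjunction.homEquiv_naturality_left,
        adj.homEquiv_unit, adj.homEquiv_unit]
      have e1 : adj.unit.app (G.obj (F.obj A.A)) ≫ G.map (adj.counit.app (F.obj A.A) ≫ f) =
          G.map f := by simp
      have e2 : G.map (F.map (adj.unit.app A.A ≫ G.map f)) ≫ G.map (adj.counit.app B) =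
          G.map f := by
        rw [← G.map_comp]
        congr 1
        simp
      exact ⟨fun h => e2.trans (h.trans e1).symm, fun h => (h.symm.trans e2).trans e1.symm⟩
    _ ≃ (A ⟶ (comparison adj).obj B) :=
      { toFun := fun g =>
          { f := _
            h := g.prop }
        invFun := fun f => ⟨f.f, f.h⟩
        left_inv := fun g => by ext; rfl
        right_inv := fun f => by ext; rfl }

/-- Construct the adjunction to the comparison functor.
-/
def leftAdjointComparison
    [∀ A : adj.toMonad.Algebra, HasCoequalizer (F.map A.a)
      (adj.counit.app (F.obj A.A))] :
    adj.toMonad.Algebra ⥤ D := by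
  refine
    Adjunction.leftAdjointOfEquiv (G := comparison adj)
      (F_obj := fun A => comparisonLeftAdjointObj adj A) (fun A B => ?_) ?_
  · apply comparisonLeftAdjointHomEquiv
  · intro A B B' g h
    ext1
    -- Porting note: the goal was previously closed by the following, which succeeds until
    -- `Category.assoc`.
    -- dsimp [comparisonLeftAdjointHomEquiv]
    -- rw [← adj.homEquiv_naturality_right, Category.assoc]
    exact (congrArg (adj.homEquiv _ _) (Category.assoc _ _ _).symm).trans
      (adj.homEquiv_naturality_right _ _)

/-- Provided we have the appropriate coequalizers, we have an adjunction to the comparison functor.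
-/
@[simps! counit]
def comparisonAdjunction
    [∀ A : adj.toMonad.Algebra, HasCoequalizer (F.map A.a)
      (adj.counit.app (F.obj A.A))] :
    leftAdjointComparison adj ⊣ comparison adj :=
  Adjunction.adjunctionOfEquivLeft _ _

variable {adj}

theorem comparisonAdjunction_unit_f_aux
    [∀ A : adj.toMonad.Algebra, HasCoequalizer (F.map A.a)
      (adj.counit.app (F.obj A.A))]
    (A : adj.toMonad.Algebra) :
    ((comparisonAdjunction adj).unit.app A).f =
      adj.homEquiv A.A _
        (coequalizer.π (F.map A.a) (adj.counit.app (F.obj A.A))) :=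
  congr_arg (adj.homEquiv _ _) (Category.comp_id _)

/-- This is a cofork which is helpful for establishing monadicity: the morphism from the Beck
coequalizer to this cofork is the unit for the adjunction on the comparison functor.
-/
@[simps! pt]
def unitCofork (A : adj.toMonad.Algebra)
    [HasCoequalizer (F.map A.a) (adj.counit.app (F.obj A.A))] :
    Cofork (G.map (F.map A.a)) (G.map (adj.counit.app (F.obj A.A))) :=
  Cofork.ofπ (G.map (coequalizer.π (F.map A.a) (adj.counit.app (F.obj A.A))))
    (by
      change _ = G.map _ ≫ _
      exact (G.map_comp _ _).symm.trans ((congrArg G.map (coequalizer.condition _ _)).trans (G.map_comp _ _)))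

@[simp]
theorem unitCofork_π (A : adj.toMonad.Algebra)
    [HasCoequalizer (F.map A.a) (adj.counit.app (F.obj A.A))] :
    (unitCofork A).π = G.map (coequalizer.π (F.map A.a) (adj.counit.app (F.obj A.A))) :=
  rfl

theorem comparisonAdjunction_unit_f
    [∀ A : adj.toMonad.Algebra, HasCoequalizer (F.map A.a)
      (adj.counit.app (F.obj A.A))]
    (A : adj.toMonad.Algebra) :
    ((comparisonAdjunction adj).unit.app A).f = (beckCoequalizer A).desc (unitCofork A) := by
  apply Limits.Cofork.IsColimit.hom_ext (beckCoequalizer A)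
  refine Eq.trans ?_ (Cofork.IsColimit.π_desc (t := unitCofork A) (beckCoequalizer A)).symm
  dsimp only [beckCofork_π, unitCofork_π]
  rw [comparisonAdjunction_unit_f_aux]
  refine (adj.homEquiv_naturality_left A.a _).symm.trans ?_
  refine (congrArg (adj.homEquiv _ _) (coequalizer.condition _ _)).trans ?_
  refine (adj.homEquiv_naturality_right _ _).trans ?_
  erw [adj.homEquiv_unit, Category.assoc]
  apply adj.right_triangle_components_assoc

variable (adj)

/-- The cofork which describes the counit of the adjunction: the morphism from the coequalizer of
this pair to this morphism is the counit.
-/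
@[simps!]
def counitCofork (B : D) :
    Cofork (F.map (G.map (adj.counit.app B)))
      (adj.counit.app (F.obj (G.obj B))) :=
  Cofork.ofπ (adj.counit.app B) (adj.counit_naturality _)

variable {adj} in
/-- The unit cofork is a colimit provided `G` preserves it. -/
def unitColimitOfPreservesCoequalizer (A : adj.toMonad.Algebra)
    [HasCoequalizer (F.map A.a) (adj.counit.app (F.obj A.A))]
    [PreservesColimit (parallelPair (F.map A.a) (adj.counit.app (F.obj A.A))) G] :
    IsColimit (unitCofork (G := G) A) :=
  isColimitOfHasCoequalizerOfPreservesColimit G _ _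

/-- The counit cofork is a colimit provided `G` reflects it. -/
def counitCoequalizerOfReflectsCoequalizer (B : D)
    [ReflectsColimit (parallelPair (F.map (G.map (adj.counit.app B)))
      (adj.counit.app (F.obj (G.obj B)))) G] :
    IsColimit (counitCofork (adj := adj) B) :=
  isColimitOfIsColimitCoforkMap G _ (beckCoequalizer ((comparison adj).obj B))

-- Porting note: Lean 3 didn't seem to need this
instance
    [∀ A : adj.toMonad.Algebra, HasCoequalizer (F.map A.a) (adj.counit.app (F.obj A.A))]
    (B : D) : HasColimit (parallelPair
      (F.map (G.map (NatTrans.app adj.counit B)))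
      (NatTrans.app adj.counit (F.obj (G.obj B)))) :=
  inferInstanceAs <| HasCoequalizer
    (F.map ((comparison adj).obj B).a)
    (adj.counit.app (F.obj ((comparison adj).obj B).A))

theorem comparisonAdjunction_counit_app
    [∀ A : adj.toMonad.Algebra, HasCoequalizer (F.map A.a) (adj.counit.app (F.obj A.A))] (B : D) :
    (comparisonAdjunction adj).counit.app B = colimit.desc _ (counitCofork adj B) := by
  apply coequalizer.hom_ext
  erw [colimit.ι_desc, colimit.ι_desc]
  exact (adj.homEquiv_counit _ _ _).trans (by erw [F.map_id, Category.id_comp]; rfl)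

end MonadicityInternal

open CategoryTheory Adjunction Monad MonadicityInternal

variable {C : Type u₁} {D : Type u₂}
variable [Category.{v₁} C] [Category.{v₂} D]
variable {G : D ⥤ C} {F : C ⥤ D} (adj : F ⊣ G)

variable (G) in
/--
If `G` is monadic, it creates colimits of `G`-split pairs. This is the "boring" direction of Beck's
monadicity theorem, the converse is given in `monadicOfCreatesGSplitCoequalizers`.
-/
def createsGSplitCoequalizersOfMonadic [MonadicRightAdjoint G] ⦃A B⦄ (f g : A ⟶ B)
    [G.IsSplitPair f g] : CreatesColimit (parallelPair f g) G := by
  apply (config := {allowSynthFailures := true}) monadicCreatesColimitOfPreservesColimit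
    -- Porting note: oddly (config := {allowSynthFailures := true}) had no effect here and below
  all_goals
    apply @preservesColimit_of_iso_diagram _ _ _ _ _ _ _ _ _ (diagramIsoParallelPair.{v₁} _).symm ?_
    dsimp
    infer_instance

section BeckMonadicity

-- Porting note: added these to replace parametric instances https://github.com/leanprover/lean4/issues/2311
-- When this is fixed the proofs below that struggle with instances should be reviewed.
-- [∀ ⦃A B⦄ (f g : A ⟶ B) [G.IsSplitPair f g], HasCoequalizer f g]
class HasCoequalizerOfIsSplitPair (G : D ⥤ C) : Prop where
  out : ∀ {A B} (f g : A ⟶ B) [G.IsSplitPair f g], HasCoequalizer f g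

-- Porting note: cannot find synth order
-- instance {A B} (f g : A ⟶ B) [G.IsSplitPair f g] [HasCoequalizerOfIsSplitPair G] :
--     HasCoequalizer f g := HasCoequalizerOfIsSplitPair.out f g

instance [HasCoequalizerOfIsSplitPair G] : ∀ (A : Algebra adj.toMonad),
    HasCoequalizer (F.map A.a)
      (adj.counit.app (F.obj A.A)) :=
  fun _ => HasCoequalizerOfIsSplitPair.out G _ _

-- Porting note: added these to replace parametric instances https://github.com/leanprover/lean4/issues/2311
-- [∀ ⦃A B⦄ (f g : A ⟶ B) [G.IsSplitPair f g], PreservesColimit (parallelPair f g) G]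
class PreservesColimitOfIsSplitPair (G : D ⥤ C) where
  out : ∀ {A B} (f g : A ⟶ B) [G.IsSplitPair f g], PreservesColimit (parallelPair f g) G

instance {A B} (f g : A ⟶ B) [G.IsSplitPair f g] [PreservesColimitOfIsSplitPair G] :
    PreservesColimit (parallelPair f g) G := PreservesColimitOfIsSplitPair.out f g

instance [PreservesColimitOfIsSplitPair G] : ∀ (A : Algebra adj.toMonad),
   PreservesColimit (parallelPair (F.map A.a)
      (NatTrans.app adj.counit (F.obj A.A))) G :=
  fun _ => PreservesColimitOfIsSplitPair.out _ _

-- Porting note: added these to replace parametric instances https://github.com/leanprover/lean4/issues/2311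
-- [∀ ⦃A B⦄ (f g : A ⟶ B) [G.IsSplitPair f g], ReflectsColimit (parallelPair f g) G] :
class ReflectsColimitOfIsSplitPair (G : D ⥤ C) where
  out : ∀ {A B} (f g : A ⟶ B) [G.IsSplitPair f g], ReflectsColimit (parallelPair f g) G

instance {A B} (f g : A ⟶ B) [G.IsSplitPair f g] [ReflectsColimitOfIsSplitPair G] :
    ReflectsColimit (parallelPair f g) G := ReflectsColimitOfIsSplitPair.out f g

instance [ReflectsColimitOfIsSplitPair G] : ∀ (A : Algebra adj.toMonad),
    ReflectsColimit (parallelPair (F.map A.a)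
      (NatTrans.app adj.counit (F.obj A.A))) G :=
  fun _ => ReflectsColimitOfIsSplitPair.out _ _

/-- To show `G` is a monadic right adjoint, we can show it preserves and reflects `G`-split
coequalizers, and `D` has them.
-/
def monadicOfHasPreservesReflectsGSplitCoequalizers [HasCoequalizerOfIsSplitPair G]
    [PreservesColimitOfIsSplitPair G] [ReflectsColimitOfIsSplitPair G] :
    MonadicRightAdjoint G where
  L := F
  adj := adj
  eqv := by
    have : ∀ (X : Algebra adj.toMonad), IsIso ((comparisonAdjunction adj).unit.app X) := by
      intro X
      apply @isIso_of_reflects_iso _ _ _ _ _ _ _ (Monad.forget adj.toMonad) ?_ _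
      · change IsIso ((comparisonAdjunction adj).unit.app X).f
        rw [_root_.CategoryTheory.MyMonadicity.MonadicityInternal.comparisonAdjunction_unit_f]
        change
          IsIso
            (IsColimit.coconePointUniqueUpToIso (beckCoequalizer X)
                (unitColimitOfPreservesCoequalizer X)).hom
        exact (IsColimit.coconePointUniqueUpToIso _ _).isIso_hom
    have : ∀ (Y : D), IsIso ((comparisonAdjunction adj).counit.app Y) := by
      intro Y
      rw [_root_.CategoryTheory.MyMonadicity.MonadicityInternal.comparisonAdjunction_counit_app]
      -- Porting note: passing instances through
      change IsIso (IsColimit.coconePointUniqueUpToIso _ ?_).hom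
      infer_instance
      -- Porting note: passing instances through
      apply @_root_.CategoryTheory.MyMonadicity.MonadicityInternal.counitCoequalizerOfReflectsCoequalizer _ _ _ _ _ _ _ _ ?_
      letI _ :
        G.IsSplitPair (F.map (G.map (adj.counit.app Y)))
          (adj.counit.app (F.obj (G.obj Y))) :=
        MonadicityInternal.main_pair_G_split _ ((comparison adj).obj Y)
      infer_instance
    exact (comparisonAdjunction adj).toEquivalence.isEquivalence_inverse

-- Porting note: added these to replace parametric instances https://github.com/leanprover/lean4/issues/2311
-- [∀ ⦃A B⦄ (f g : A ⟶ B) [G.IsSplitPair f g], CreatesColimit (parallelPair f g) G] :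
class CreatesColimitOfIsSplitPair (G : D ⥤ C) where
  out : ∀ {A B} (f g : A ⟶ B) [G.IsSplitPair f g], CreatesColimit (parallelPair f g) G

instance {A B} (f g : A ⟶ B) [G.IsSplitPair f g] [CreatesColimitOfIsSplitPair G] :
    CreatesColimit (parallelPair f g) G := CreatesColimitOfIsSplitPair.out f g

instance [CreatesColimitOfIsSplitPair G] : ∀ (A : Algebra adj.toMonad),
    CreatesColimit (parallelPair (F.map A.a)
      (NatTrans.app adj.counit (F.obj A.A))) G :=
  fun _ => CreatesColimitOfIsSplitPair.out _ _

/--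
Beck's monadicity theorem. If `G` has a left adjoint and creates coequalizers of `G`-split pairs,
then it is monadic.
This is the converse of `createsGSplitCoequalizersOfMonadic`.
-/
def monadicOfCreatesGSplitCoequalizers [CreatesColimitOfIsSplitPair G] :
    MonadicRightAdjoint G := by
  let I {A B} (f g : A ⟶ B) [G.IsSplitPair f g] : HasColimit (parallelPair f g ⋙ G) := by
    apply @hasColimit_of_iso _ _ _ _ _ _ ?_ (diagramIsoParallelPair.{v₁} _)
    exact inferInstanceAs <| HasCoequalizer (G.map f) (G.map g)
  have : HasCoequalizerOfIsSplitPair G := ⟨fun _ _ => hasColimit_of_created (parallelPair _ _) G⟩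
  have : PreservesColimitOfIsSplitPair G := ⟨by intros; infer_instance⟩
  have : ReflectsColimitOfIsSplitPair G := ⟨by intros; infer_instance⟩
  exact monadicOfHasPreservesReflectsGSplitCoequalizers adj

/-- An alternate version of Beck's monadicity theorem. If `G` reflects isomorphisms, preserves
coequalizers of `G`-split pairs and `C` has coequalizers of `G`-split pairs, then it is monadic.
-/
def monadicOfHasPreservesGSplitCoequalizersOfReflectsIsomorphisms [G.ReflectsIsomorphisms]
    [HasCoequalizerOfIsSplitPair G] [PreservesColimitOfIsSplitPair G] :
    MonadicRightAdjoint G := by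
  have : ReflectsColimitOfIsSplitPair G := ⟨fun f g _ => by
    have := HasCoequalizerOfIsSplitPair.out G f g
    apply reflectsColimit_of_reflectsIsomorphisms⟩
  apply monadicOfHasPreservesReflectsGSplitCoequalizers adj

end BeckMonadicity


end
end MyMonadicity
end CategoryTheory

namespace CategoryTheory

open CategoryTheory.Limits

noncomputable section

lemma my_monadic_reflectsIsomorphisms {C : Type u₁} {D : Type u₂} [Category.{v₁} C]
    [Category.{v₂} D] (R : D ⥤ C) [MonadicRightAdjoint R] : R.ReflectsIsomorphisms := by
  constructor
  intro X Y f hf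
  have h := Monad.comparisonForget (monadicAdjunction R)
  have h2 : IsIso ((Monad.comparison (monadicAdjunction R) ⋙
      (monadicAdjunction R).toMonad.forget).map f) := (NatIso.isIso_map_iff h f).mpr hf
  exact isIso_of_reflects_iso f (Monad.comparison (monadicAdjunction R) ⋙
      (monadicAdjunction R).toMonad.forget)

end

end CategoryTheory

end AuxUniverses

open CategoryTheory CategoryTheory.Limits

/-- if `U : C ⥤ Set` is a monadic right adjoint and `I` is a small
category, then the functor `U_I : C^I ⥤ Set^{I₀}` (where `I₀` is the discrete
category on the objects of `I`), sending a diagram `A` to the family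
`i ↦ U (A i)`, i.e. the composite of restriction along the inclusion
`ι : I₀ ⥤ I` with postcomposition by `U`, is a monadic right adjoint. -/
theorem diagram_functor_monadic {C : Type u₁} [Category.{v₁} C] (U : C ⥤ Type w)
    [MonadicRightAdjoint U] (I : Type w) [SmallCategory I] :
    Nonempty (MonadicRightAdjoint
      (((Functor.whiskeringLeft (Discrete I) I C).obj (Discrete.functor (id : I → I))) ⋙
        ((Functor.whiskeringRight (Discrete I) C (Type w)).obj U))) := by
  classical
  set ι : Discrete I ⥤ I := Discrete.functor (id : I → I) with hι
  set G : (I ⥤ C) ⥤ (Discrete I ⥤ Type w) :=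
    ((Functor.whiskeringLeft (Discrete I) I C).obj ι) ⋙
      ((Functor.whiskeringRight (Discrete I) C (Type w)).obj U) with hG
  haveI hUrefl : U.ReflectsIsomorphisms := my_monadic_reflectsIsomorphisms U
  -- the adjunction
  let adjU := monadicAdjunction U
  let adjPost : (Functor.whiskeringRight I (Type w) C).obj (monadicLeftAdjoint U) ⊣
      (Functor.whiskeringRight I C (Type w)).obj U := Adjunction.whiskerRight I adjU
  let adjLan : ι.lan ⊣ (Functor.whiskeringLeft (Discrete I) I (Type w)).obj ι :=
    ι.lanAdjunction (Type w)
  let adjG : (ι.lan ⋙ (Functor.whiskeringRight I (Type w) C).obj (monadicLeftAdjoint U)) ⊣ G :=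
    adjLan.comp adjPost
  -- split pairs evaluate to split pairs
  have splitEval : ∀ {A B : I ⥤ C} (f g : A ⟶ B), G.IsSplitPair f g →
      ∀ i : I, U.IsSplitPair (f.app i) (g.app i) := by
    intro A B f g hfg i
    obtain ⟨Z, h, ⟨t⟩⟩ := hfg.splittable
    exact ⟨⟨Z.obj ⟨i⟩, h.app ⟨i⟩,
      ⟨t.map ((evaluation (Discrete I) (Type w)).obj ⟨i⟩)⟩⟩⟩
  -- pointwise colimits
  have ptCreates : ∀ {A B : I ⥤ C} (f g : A ⟶ B), G.IsSplitPair f g →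
      ∀ i : I, CreatesColimit (parallelPair (f.app i) (g.app i)) U := by
    intro A B f g hfg i
    haveI := splitEval f g hfg i
    exact MyMonadicity.createsGSplitCoequalizersOfMonadic (G := U) (f.app i) (g.app i)
  have ptHasComp : ∀ {A B : I ⥤ C} (f g : A ⟶ B), G.IsSplitPair f g →
      ∀ i : I, HasColimit (parallelPair (f.app i) (g.app i) ⋙ U) := by
    intro A B f g hfg i
    haveI := splitEval f g hfg i
    exact hasColimit_of_iso (F := parallelPair (U.map (f.app i)) (U.map (g.app i)))
      (diagramIsoParallelPair _)
  have ptHas : ∀ {A B : I ⥤ C} (f g : A ⟶ B), G.IsSplitPair f g →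
      ∀ i : I, HasColimit (parallelPair (f.app i) (g.app i)) := by
    intro A B f g hfg i
    haveI := ptCreates f g hfg i
    haveI := ptHasComp f g hfg i
    exact hasColimit_of_created (parallelPair (f.app i) (g.app i)) U
  have flipHas : ∀ {A B : I ⥤ C} (f g : A ⟶ B), G.IsSplitPair f g →
      ∀ i : I, HasColimit ((parallelPair f g).flip.obj i) := by
    intro A B f g hfg i
    haveI := ptHas f g hfg i
    exact hasColimit_of_iso (F := parallelPair (f.app i) (g.app i))
      (diagramIsoParallelPair _)
  haveI hHas : MyMonadicity.HasCoequalizerOfIsSplitPair G := by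
    constructor
    intro A B f g hfg
    haveI := fun i => flipHas f g hfg i
    exact HasColimit.mk ⟨combineCocones _ fun i => getColimitCocone _, combinedIsColimit _ _⟩
  haveI hPres : MyMonadicity.PreservesColimitOfIsSplitPair G := by
    constructor
    intro A B f g hfg
    haveI := fun i => flipHas f g hfg i
    apply preservesColimit_of_evaluation
    rintro ⟨i⟩
    show PreservesColimit (parallelPair f g) (((evaluation I C).obj i) ⋙ U)
    haveI := ptCreates f g hfg i
    haveI := ptHasComp f g hfg i
    haveI : PreservesColimit (parallelPair
        ((parallelPair f g ⋙ (evaluation I C).obj i).map WalkingParallelPairHom.left)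
        ((parallelPair f g ⋙ (evaluation I C).obj i).map WalkingParallelPairHom.right)) U := by
      have hp : PreservesColimit (parallelPair (f.app i) (g.app i)) U := inferInstance
      exact hp
    haveI : PreservesColimit (parallelPair f g ⋙ (evaluation I C).obj i) U :=
      preservesColimit_of_iso_diagram U
        (diagramIsoParallelPair (parallelPair f g ⋙ (evaluation I C).obj i)).symm
    infer_instance
  haveI hRefl : G.ReflectsIsomorphisms := by
    constructor
    intro A B η h
    have : ∀ i : I, IsIso (η.app i) := by
      intro i
      have h1 : IsIso ((G.map η).app ⟨i⟩) := inferInstance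
      have h2 : IsIso (U.map (η.app i)) := h1
      exact isIso_of_reflects_iso (η.app i) U
    exact NatIso.isIso_of_isIso_app η
  exact ⟨MyMonadicity.monadicOfHasPreservesGSplitCoequalizersOfReflectsIsomorphisms adjG⟩
end

section
/- Let U : C → Set be a right adjoint with left adjoint F, let 𝔾 = F U be the induced comonad on C, let I be a small category, let U_I : C^I → Set^{I₀} be the functor A ↦ (i ↦ U(A(i))) (where I₀ is the discrete category on the objects of I), let F_I be its left adjoint (left Kan extension along the inclusion I₀ → I followed by pointwise application of F), and let 𝔾_I = F_I U_I be the induced comonad on C^I. If a diagram A : I → C is 𝔾_I-projective, then for every object i of I the object A(i) is 𝔾-projective in C. -/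
open CategoryTheory

variable {C : Type u₁} [Category.{v₁} C]

/-- A morphism `f : X ⟶ Y` is a `𝔾`-epimorphism if for every object `Z` the
postcomposition map `Hom(G Z, X) → Hom(G Z, Y)` is surjective. -/
def IsGEpi (G : Comonad C) {X Y : C} (f : X ⟶ Y) : Prop :=
  ∀ Z : C, Function.Surjective (fun g : (G : C ⥤ C).obj Z ⟶ X => g ≫ f)

/-- An object `P` is `𝔾`-projective if for every `𝔾`-epimorphism `f : X ⟶ Y` the
postcomposition map `Hom(P, X) → Hom(P, Y)` is surjective. -/
def IsGProjective (G : Comonad C) (P : C) : Prop :=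
  ∀ ⦃X Y : C⦄ (f : X ⟶ Y), IsGEpi G f → Function.Surjective (fun g : P ⟶ X => g ≫ f)

/-- let `F ⊣ U` with `U : C ⥤ Set`, `𝔾 = F U` the induced comonad,
`I` a small category, `U_I : C^I ⥤ Set^{I₀}` the functor `A ↦ (i ↦ U (A i))`,
`F_I` its left adjoint, and `𝔾_I = F_I U_I` the induced comonad on `C^I`.
If `A : I ⥤ C` is `𝔾_I`-projective then each `A(i)` is `𝔾`-projective. -/
theorem objectwise_G_projective_of_diagram_projective
    (F : Type w ⥤ C) (U : C ⥤ Type w) (adj : F ⊣ U)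
    (I : Type w) [SmallCategory I]
    (FI : (Discrete I ⥤ Type w) ⥤ (I ⥤ C))
    (adjI : FI ⊣ (((Functor.whiskeringLeft (Discrete I) I C).obj (Discrete.functor (id : I → I))) ⋙
      ((Functor.whiskeringRight (Discrete I) C (Type w)).obj U)))
    (A : I ⥤ C) (hA : IsGProjective adjI.toComonad A) (i : I) :
    IsGProjective adj.toComonad (A.obj i) := by
  let UIfun : (I ⥤ C) ⥤ (Discrete I ⥤ Type w) :=
    (((Functor.whiskeringLeft (Discrete I) I C).obj (Discrete.functor (id : I → I))) ⋙
      ((Functor.whiskeringRight (Discrete I) C (Type w)).obj U))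
  -- pointwise counit morphism of diagrams
  let Ahat : I ⥤ C := A ⋙ U ⋙ F
  let e : Ahat ⟶ A :=
    { app := fun j => adj.counit.app (A.obj j)
      naturality := fun j k u => adj.counit.naturality (A.map u) }
  have he : IsGEpi adjI.toComonad e := by
    intro Z y
    let φ : UIfun.obj Z ⟶ UIfun.obj A := (adjI.homEquiv _ _) y
    let ψ : UIfun.obj Z ⟶ UIfun.obj Ahat :=
      Discrete.natTrans (fun j => φ.app j ≫ adj.unit.app (U.obj (A.obj j.as)))
    refine ⟨(adjI.homEquiv _ _).symm ψ, ?_⟩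
    apply (adjI.homEquiv _ _).injective
    erw [Adjunction.homEquiv_naturality_right, Equiv.apply_symm_apply]
    ext j
    simp only [ψ, φ, Ahat, e, UIfun]
    simp
  obtain ⟨s, hs⟩ := hA e he (𝟙 A)
  intro X Y f hf g
  obtain ⟨h, hh⟩ := hf (A.obj i) (adj.counit.app (A.obj i) ≫ g)
  refine ⟨s.app i ≫ h, ?_⟩
  have hsi := congrArg (fun t => t.app i) hs
  simp only [NatTrans.comp_app, NatTrans.id_app] at hsi
  dsimp only at hh ⊢
  erw [Category.assoc, hh, ← Category.assoc]
  simp only [e] at hsi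
  rw [hsi, Category.id_comp]
end

section
/- Let (R, ψ) be a Ψ-ring and M a Ψ-module over R with operations Ψⁿ : M → M. Then the trivial square-zero extension R ⋊ M (with multiplication (r,m)(r',m') = (rr', r·m' + r'·m)), equipped with the maps ψ̃ⁿ(r,m) = (ψⁿ(r), Ψⁿ(m)) for n ≥ 1, is a Ψ-ring: each ψ̃ⁿ is a ring homomorphism R ⋊ M → R ⋊ M, ψ̃¹ = id, and ψ̃ⁿ ∘ ψ̃ᵐ = ψ̃ⁿᵐ for all n, m ≥ 1. -/
/-- if `(R, ψ)` is a Ψ-ring and `M` a Ψ-module over `R` with operations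
`Ψⁿ`, then the trivial square-zero extension `R ⋊ M`, with the maps
`ψ̃ⁿ(r, m) = (ψⁿ r, Ψⁿ m)`, is a Ψ-ring: each `ψ̃ⁿ` is a ring homomorphism,
`ψ̃¹ = id`, and `ψ̃ⁿ ∘ ψ̃ᵐ = ψ̃ⁿᵐ`. -/
theorem semidirect_product_is_psi_ring (R : Type u) (M : Type v) [CommRing R]
    [AddCommGroup M] [Module R M] [Module Rᵐᵒᵖ M] [IsCentralScalar R M]
    -- the Ψ-ring structure on R
    (ψ : ℕ+ → R →+* R) (hψ1 : ψ 1 = RingHom.id R)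
    (hψmul : ∀ n m : ℕ+, (ψ n).comp (ψ m) = ψ (n * m))
    -- the Ψ-module structure on M
    (Ψ : ℕ+ → M →+ M) (hΨ1 : Ψ 1 = AddMonoidHom.id M)
    (hΨsmul : ∀ (n : ℕ+) (r : R) (m : M), Ψ n (r • m) = ψ n r • Ψ n m)
    (hΨmul : ∀ n l : ℕ+, (Ψ n).comp (Ψ l) = Ψ (n * l)) :
    ∃ ψt : ℕ+ → TrivSqZeroExt R M →+* TrivSqZeroExt R M,
      (∀ (n : ℕ+) (x : TrivSqZeroExt R M),
        (ψt n x).fst = ψ n x.fst ∧ (ψt n x).snd = Ψ n x.snd) ∧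
      ψt 1 = RingHom.id (TrivSqZeroExt R M) ∧
      ∀ n m : ℕ+, (ψt n).comp (ψt m) = ψt (n * m) := by
  refine ⟨fun n =>
    { toFun := fun x => ⟨ψ n x.fst, Ψ n x.snd⟩
      map_one' := ?_
      map_mul' := ?_
      map_zero' := ?_
      map_add' := ?_ }, ?_, ?_, ?_⟩
  · ext <;> simp [TrivSqZeroExt.fst_one, TrivSqZeroExt.snd_one]
  · intro x y
    ext
    · simp [TrivSqZeroExt.fst_mul]; rfl
    · simp only [TrivSqZeroExt.snd_mul, map_add, TrivSqZeroExt.snd_mk,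
        TrivSqZeroExt.fst_mk]
      rw [op_smul_eq_smul, hΨsmul, hΨsmul, ← op_smul_eq_smul (ψ n y.fst)]; rfl
  · ext <;> simp
  · intro x y; ext <;> simp <;> rfl
  · intro n x; exact ⟨rfl, rfl⟩
  · ext x <;> simp [hψ1, hΨ1] <;> rfl
  · intro n m
    ext x
    · exact RingHom.congr_fun (hψmul n m) x.fst
    · exact DFunLike.congr_fun (hΨmul n m) x.snd
end

section
/- Let U : C → Set be a right adjoint with left adjoint F, let I be a small category, let U_I : C^I → Set^{I₀} be the functor A ↦ (i ↦ U(A(i))) (where I₀ is the discrete category on the objects of I), and let F_I be its left adjoint, given by left Kan extension along the inclusion ι : I₀ → I followed by pointwise application of F. Then the induced comonad 𝔾_I = F_I U_I on C^I is computed objectwise by coproducts of values of the comonad 𝔾 = F U on C: for every diagram A : I → C and every object i of I, there is an isomorphism (𝔾_I A)(i) ≅ ∐_{x ∈ ob(I), u : x → i} 𝔾(A(x)) = ∐_{x, u : x → i} F(U(A(x))), the coproduct in C over all objects x and all morphisms u : x → i. -/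
open CategoryTheory CategoryTheory.Limits


instance costructArrowDiscSub {I : Type w} [SmallCategory I] {i : I}
    (g g' : CostructuredArrow (Discrete.functor (id : I → I)) i) :
    Subsingleton (g ⟶ g') :=
  ⟨fun a b => by
    apply CommaMorphism.ext
    · apply Subsingleton.elim
    · apply Subsingleton.elim⟩

/-- The costructured arrow category over a discrete inclusion is a discrete category. -/
def costructEquiv (I : Type w) [SmallCategory I] (i : I) :
    Discrete (Σ x : I, x ⟶ i) ≌ CostructuredArrow (Discrete.functor (id : I → I)) i where
  functor := Discrete.functor (fun p => CostructuredArrow.mk (Y := Discrete.mk p.1) (p.2 : _ ⟶ i))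
  inverse :=
    { obj := fun g => Discrete.mk ⟨g.left.as, g.hom⟩
      map := fun {g g'} φ => eqToHom (by
        obtain ⟨⟨x⟩, ⟨⟨⟩⟩, u⟩ := g
        obtain ⟨⟨y⟩, ⟨⟨⟩⟩, v⟩ := g'
        obtain ⟨⟨⟨⟨h⟩⟩⟩, _, w⟩ := φ
        simp at w
        subst w
        rfl) }
  unitIso := Discrete.natIso (fun p => eqToIso (by rfl))
  counitIso := NatIso.ofComponents (fun g => eqToIso (by
      obtain ⟨⟨x⟩, ⟨⟨⟩⟩, u⟩ := g
      rfl)) (fun _ => Subsingleton.elim _ _)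
  functor_unitIso_comp := fun _ => Subsingleton.elim _ _

/-- let `F ⊣ U` with `U : C ⥤ Set`, `I` a small category,
`U_I : C^I ⥤ Set^{I₀}` the functor `A ↦ (i ↦ U (A i))` and `F_I` its left adjoint.
Then the comonad `𝔾_I = F_I U_I` on `C^I` is computed objectwise by coproducts of
values of the comonad `𝔾 = F U`: for every `A : I ⥤ C` and every `i`, the
coproduct `∐_{x, u : x ⟶ i} F (U (A x))` exists in `C` and
`(𝔾_I A)(i) ≅ ∐_{x, u : x ⟶ i} F (U (A x))`. -/
theorem diagram_comonad_objectwise {C : Type u₁} [Category.{v₁} C]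
    (F : Type w ⥤ C) (U : C ⥤ Type w) (adj : F ⊣ U)
    (I : Type w) [SmallCategory I]
    (FI : (Discrete I ⥤ Type w) ⥤ (I ⥤ C))
    (adjI : FI ⊣ (((Functor.whiskeringLeft (Discrete I) I C).obj (Discrete.functor (id : I → I))) ⋙
      ((Functor.whiskeringRight (Discrete I) C (Type w)).obj U)))
    (A : I ⥤ C) (i : I) :
    ∃ h : HasCoproduct (fun p : Σ x : I, x ⟶ i => F.obj (U.obj (A.obj p.1))),
      Nonempty ((adjI.toComonad.obj A).obj i ≅
        @sigmaObj _ _ _ (fun p : Σ x : I, x ⟶ i => F.obj (U.obj (A.obj p.1))) h) := by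
  haveI : PreservesColimitsOfSize.{w, w} F := adj.leftAdjoint_preservesColimits
  let ι : Discrete I ⥤ I := Discrete.functor (id : I → I)
  let L : (Discrete I ⥤ Type w) ⥤ (I ⥤ C) :=
    ι.lan ⋙ (Functor.whiskeringRight I (Type w) C).obj F
  let adjL : L ⊣ (((Functor.whiskeringLeft (Discrete I) I C).obj ι) ⋙
      ((Functor.whiskeringRight (Discrete I) C (Type w)).obj U)) :=
    (ι.lanAdjunction (Type w)).comp (Adjunction.whiskerRight I adj)
  let e1 : FI ≅ L := adjI.leftAdjointUniq adjL
  let X : Discrete I ⥤ Type w := ι ⋙ A ⋙ U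
  let D : CostructuredArrow ι i ⥤ C := (CostructuredArrow.proj ι i ⋙ X) ⋙ F
  let E := costructEquiv I i
  let iso6 : E.functor ⋙ D ≅
      Discrete.functor (fun p : Σ x : I, x ⟶ i => F.obj (U.obj (A.obj p.1))) :=
    Discrete.natIso (fun p => Iso.refl _)
  haveI h : HasCoproduct (fun p : Σ x : I, x ⟶ i => F.obj (U.obj (A.obj p.1))) :=
    hasColimit_of_iso iso6.symm
  refine ⟨h, ⟨?_⟩⟩
  let iso1 : (adjI.toComonad.obj A).obj i ≅ (L.obj X).obj i := (e1.app X).app i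
  let iso3 : (L.obj X).obj i ≅ F.obj (colimit (CostructuredArrow.proj ι i ⋙ X)) :=
    F.mapIso (ι.leftKanExtensionObjIsoColimit X i)
  let iso4 : F.obj (colimit (CostructuredArrow.proj ι i ⋙ X)) ≅ colimit D :=
    preservesColimitIso F (CostructuredArrow.proj ι i ⋙ X)
  let iso5 : colimit (E.functor ⋙ D) ≅ colimit D := Functor.Final.colimitIso E.functor D
  let iso7 : colimit (E.functor ⋙ D) ≅
      colimit (Discrete.functor (fun p : Σ x : I, x ⟶ i => F.obj (U.obj (A.obj p.1)))) :=
    HasColimit.isoOfNatIso iso6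
  exact iso1 ≪≫ iso3 ≪≫ iso4 ≪≫ iso5.symm ≪≫ iso7
end
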